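/- Let k be a field, d an odd integer with d ≥ 3, and m an integer with d+1 < m; set a = (d+1)/2. Then the Stanley–Reisner ideal of Δ(d,m) in k[x_1,…,x_m] equals I_{a,2,m−1} + x_1x_m·I_{a−1,3,m−2}; equivalently, k[Δ(d,m)] is isomorphic as a k-algebra to k[x_1,…,x_m]/(I_{a,2,m−1} + x_1x_m·I_{a−1,3,m−2}). -/

import Mathlib

/-- The variable `x_t` (1-indexed, for `1 ≤ t ≤ n`) of the polynomial ring
`k[x_1, …, x_n]`, realized as `MvPolynomial (Fin n) k`. -/
noncomputable def Xv (k : Type*) [Field k] (n t : ℕ) : MvPolynomial (Fin n) k :=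
  if h : 1 ≤ t ∧ t ≤ n then MvPolynomial.X ⟨t - 1, by omega⟩ else 0

/-- The ideal `I_{a,p,q}` of `k[x_1, …, x_n]`, generated by the squarefree monomials
`x_{t_1} ⋯ x_{t_a}` with `p ≤ t_1 < t_2 < ⋯ < t_a ≤ q` and `t_{j+1} ≥ t_j + 2`. -/
noncomputable def idealI (k : Type*) [Field k] (n a p q : ℕ) :
    Ideal (MvPolynomial (Fin n) k) :=
  Ideal.span { f | ∃ t : ℕ → ℕ, p ≤ t 0 ∧ t (a - 1) ≤ q ∧
    (∀ j, j + 1 < a → t j + 2 ≤ t (j + 1)) ∧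
    f = ∏ j ∈ Finset.range a, Xv k n (t j) }

/-- The number of odd contiguous subsets of `W ⊆ {1, …, m}`: a contiguous subset of `W` is a
set `{i, i+1, …, j} ⊆ W` with `2 ≤ i ≤ j ≤ m−1`, `i−1 ∉ W`, `j+1 ∉ W`; it is odd contiguous
if its cardinality `j − i + 1` is odd. -/
def oddContig (m : ℕ) (W : Finset ℕ) : ℕ :=
  ((Finset.Icc 2 (m - 1) ×ˢ Finset.Icc 2 (m - 1)).filter
    (fun p : ℕ × ℕ => p.1 ≤ p.2 ∧ Finset.Icc p.1 p.2 ⊆ W ∧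
      p.1 - 1 ∉ W ∧ p.2 + 1 ∉ W ∧ Odd (p.2 - p.1 + 1))).card

/-- Gale evenness criterion: `W ⊆ {1, …, m}` is a face of the boundary complex `Δ(d,m)` of the
`d`-dimensional cyclic polytope with `m` vertices iff `#W ≤ d` and the number of odd
contiguous subsets of `W` is at most `d − #W`. -/
def isFace (d m : ℕ) (W : Finset ℕ) : Prop :=
  W ⊆ Finset.Icc 1 m ∧ W.card ≤ d ∧ oddContig m W ≤ d - W.card

/-- The Stanley–Reisner ideal of `Δ(d,m)` in `k[x_1, …, x_m]`, generated by the squarefree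
monomials `∏_{i ∈ W} x_i` over the non-faces `W ⊆ {1, …, m}`. -/
noncomputable def SRideal (k : Type*) [Field k] (d m : ℕ) :
    Ideal (MvPolynomial (Fin m) k) :=
  Ideal.span { f | ∃ W : Finset ℕ, W ⊆ Finset.Icc 1 m ∧ ¬ isFace d m W ∧
    f = ∏ i ∈ W, Xv k m i }

namespace SRaux
open Finset

def sparse (S : Finset ℕ) : Prop := ∀ x ∈ S, x + 1 ∉ S

lemma sparse_union {S T : Finset ℕ} (hS : sparse S) (hT : sparse T)
    (hsep : ∀ x ∈ S, ∀ y ∈ T, x + 2 ≤ y) : sparse (S ∪ T) := by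
  intro x hx hx1
  rcases mem_union.1 hx with h | h <;> rcases mem_union.1 hx1 with h1 | h1
  · exact hS x h h1
  · exact absurd (hsep x h _ h1) (by omega)
  · exact absurd (hsep _ h1 x h) (by omega)
  · exact hT x h h1

lemma sparse_subset {S T : Finset ℕ} (hT : T ⊆ S) (hS : sparse S) : sparse T := by
  intro x hx hx1
  -- not true! sparse is "x+1 ∉ S"; subset: x ∈ T ⊆ S, need x+1 ∉ T; x+1 ∈ T → x+1 ∈ S contradiction
  exact hS x (hT hx) (hT hx1)

def downPicks (top n : ℕ) : Finset ℕ := (Finset.range n).image (fun i => top - 2 * i)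

lemma mem_downPicks {top n x : ℕ} (h : 2 * n ≤ top + 2) :
    x ∈ downPicks top n ↔ ∃ i < n, x + 2 * i = top := by
  simp only [downPicks, mem_image, mem_range]
  constructor
  · rintro ⟨i, hi, rfl⟩; exact ⟨i, hi, by omega⟩
  · rintro ⟨i, hi, hx⟩; exact ⟨i, hi, by omega⟩

lemma card_downPicks {top n : ℕ} (h : 2 * n ≤ top + 2) : (downPicks top n).card = n := by
  rw [downPicks, Finset.card_image_of_injOn, card_range]
  intro i hi j hj hij
  simp only [mem_coe, mem_range] at hi hj
  simp only at hij
  omega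

lemma sparse_downPicks {top n : ℕ} (h : 2 * n ≤ top + 2) : sparse (downPicks top n) := by
  intro x hx hx1
  rw [mem_downPicks h] at hx hx1
  omega

lemma downPicks_le {top n x : ℕ} (h : 2 * n ≤ top + 2) (hx : x ∈ downPicks top n) : x ≤ top := by
  rw [mem_downPicks h] at hx; omega

lemma downPicks_ge {top n x : ℕ} (h : 2 * n ≤ top + 2) (hx : x ∈ downPicks top n) :
    top + 2 ≤ x + 2 * n := by
  rw [mem_downPicks h] at hx; omega


def Pcond (V : Finset ℕ) (p : ℕ × ℕ) : Prop :=
  p.1 ≤ p.2 ∧ Finset.Icc p.1 p.2 ⊆ V ∧ p.1 - 1 ∉ V ∧ p.2 + 1 ∉ V ∧ Odd (p.2 - p.1 + 1)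

instance (V : Finset ℕ) : DecidablePred (Pcond V) := fun p => by
  unfold Pcond; infer_instance

def oR (V : Finset ℕ) : ℕ := ((V ×ˢ V).filter (Pcond V)).card

lemma oR_decomp (V : Finset ℕ) (j r : ℕ) (hj : j ∈ V) (hjmax : ∀ x ∈ V, x ≤ j)
    (hr : r ∉ V) (hrj : r ≤ j) (hrun : ∀ x, r < x → x ≤ j → x ∈ V) :
    oR V = oR (V.filter (· ≤ r)) + (if Odd (j - r) then 1 else 0) := by
  set V' := V.filter (· ≤ r) with hV'
  have hmemV' : ∀ x, x ∈ V' ↔ x ∈ V ∧ x ≤ r := by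
    intro x; simp [hV', Finset.mem_filter]
  have hup : ∀ x, x ∈ V' → x + 1 ≤ r := by
    intro x hx
    have h := (hmemV' x).1 hx
    rcases Nat.lt_or_ge x r with h' | h' 
    · omega
    · exfalso; have : x = r := by omega
      exact hr (this ▸ h.1)
  have hrlt : r < j := lt_of_le_of_ne hrj (fun h => hr (h ▸ hj))
  have key : ∀ p : ℕ × ℕ, p ∈ (V ×ˢ V).filter (Pcond V) ↔
      p ∈ (V' ×ˢ V').filter (Pcond V') ∨ (p = (r+1, j) ∧ Odd (j - r)) := by
    rintro ⟨p₁, p₂⟩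
    simp only [Finset.mem_filter, Finset.mem_product, Pcond]
    constructor
    · rintro ⟨⟨h1, h2⟩, hle, hIcc, hl, hrgt, hodd⟩
      by_cases hc : p₂ ≤ r
      · left
        have h2r : p₂ ≤ r - 1 := by
          rcases Nat.lt_or_ge p₂ r with h | h
          · omega
          · exfalso; have : p₂ = r := by omega
            exact hr (this ▸ h2)
        have hIcc' : Finset.Icc p₁ p₂ ⊆ V' := by
          intro x hx
          have hx' := Finset.mem_Icc.1 hx
          exact (hmemV' x).2 ⟨hIcc hx, by omega⟩
        refine ⟨⟨(hmemV' p₁).2 ⟨h1, by omega⟩, (hmemV' p₂).2 ⟨h2, by omega⟩⟩,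
          hle, hIcc', ?_, ?_, hodd⟩
        · intro hmem; exact hl ((hmemV' _).1 hmem).1
        · intro hmem; exact hrgt ((hmemV' _).1 hmem).1
      · right
        push_neg at hc
        have hp2j : p₂ = j := by
          have hp2le := hjmax _ h2
          rcases Nat.lt_or_ge p₂ j with h | h
          · exact absurd (hrun (p₂+1) (by omega) (by omega)) hrgt
          · omega
        have hp1r : r < p₁ := by
          rcases Nat.lt_or_ge r p₁ with h | h
          · exact h
          · exfalso
            exact hr (hIcc (Finset.mem_Icc.2 ⟨h, by omega⟩))
        have hp1 : p₁ = r + 1 := by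
          rcases Nat.lt_or_ge (r+1) p₁ with h' | h'
          · exfalso
            have hmem : p₁ - 1 ∈ V := hrun (p₁ - 1) (by omega) (by have := hjmax _ h1; omega)
            exact hl hmem
          · omega
        refine ⟨by rw [Prod.mk.injEq]; exact ⟨hp1, hp2j⟩, ?_⟩
        have heq : p₂ - p₁ + 1 = j - r := by omega
        rwa [heq] at hodd
    · rintro (⟨⟨h1, h2⟩, hle, hIcc, hl, hrgt, hodd⟩ | ⟨heq, hodd⟩)
      · have h1r := hup _ h1
        have h2r := hup _ h2
        have h1V := ((hmemV' _).1 h1).1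
        have h2V := ((hmemV' _).1 h2).1
        refine ⟨⟨h1V, h2V⟩, hle, ?_, ?_, ?_, hodd⟩
        · intro x hx; exact ((hmemV' x).1 (hIcc hx)).1
        · intro hmem
          exact hl ((hmemV' _).2 ⟨hmem, by omega⟩)
        · intro hmem
          exact hrgt ((hmemV' _).2 ⟨hmem, by omega⟩)
      · have e1 : p₁ = r + 1 := congrArg Prod.fst heq
        have e2 : p₂ = j := congrArg Prod.snd heq
        have hIcc : Finset.Icc p₁ p₂ ⊆ V := by
          intro x hx
          have hx' := Finset.mem_Icc.1 hx
          exact hrun x (by omega) (by omega)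
        refine ⟨⟨?_, ?_⟩, by omega, hIcc, ?_, ?_, ?_⟩
        · rw [e1]; exact hrun (r+1) (by omega) (by omega)
        · rw [e2]; exact hj
        · have h' : p₁ - 1 = r := by omega
          rw [h']; exact hr
        · intro hmem; have := hjmax _ hmem; omega
        · have h' : p₂ - p₁ + 1 = j - r := by omega
          rw [h']; exact hodd
  have hset : (V ×ˢ V).filter (Pcond V) =
      (V' ×ˢ V').filter (Pcond V') ∪ (if Odd (j - r) then {(r+1, j)} else ∅) := by
    ext p
    rw [Finset.mem_union, key p]
    by_cases ho : Odd (j - r) <;> simp [ho]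
  have hnot : (r+1, j) ∉ (V' ×ˢ V').filter (Pcond V') := by
    intro hmem
    have := hup _ (Finset.mem_product.1 (Finset.mem_filter.1 hmem).1).2
    omega
  rw [oR, oR, hset]
  by_cases ho : Odd (j - r)
  · simp only [ho, if_true]
    rw [Finset.union_comm, Finset.card_union_of_disjoint (by simp [hnot])]
    simp [Finset.card_singleton]; omega
  · simp [ho]


lemma card_union_sep {S T : Finset ℕ} (hsep : ∀ x ∈ S, ∀ y ∈ T, x + 2 ≤ y) :
    (S ∪ T).card = S.card + T.card := by
  rw [Finset.card_union_of_disjoint]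
  rw [Finset.disjoint_left]
  intro x hx hx'
  exact absurd (hsep x hx x hx') (by omega)


/-- Lemma R: extraction of a sparse subset covering half of `V` plus odd runs. -/
lemma lemR : ∀ V : Finset ℕ, 0 ∉ V →
    ∃ S ⊆ V, sparse S ∧ V.card + oR V ≤ 2 * S.card := by
  intro V
  induction V using Finset.strongInduction with
  | _ V ih =>
  intro h0
  rcases V.eq_empty_or_nonempty with rfl | hne
  · refine ⟨∅, Finset.Subset.refl _, by intro x hx; simp at hx, ?_⟩
    simp [oR]
  · set j := V.max' hne with hj
    have hjV : j ∈ V := V.max'_mem hne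
    have hjmax : ∀ x ∈ V, x ≤ j := fun x hx => V.le_max' x hx
    have hDne : ((Finset.range (j+1)).filter (· ∉ V)).Nonempty := by
      refine ⟨0, ?_⟩
      simp only [Finset.mem_filter, Finset.mem_range]
      exact ⟨by omega, h0⟩
    set r := ((Finset.range (j+1)).filter (· ∉ V)).max' hDne with hrdef
    have hrmem := ((Finset.range (j+1)).filter (· ∉ V)).max'_mem hDne
    simp only [Finset.mem_filter, Finset.mem_range] at hrmem
    obtain ⟨hrj', hr⟩ := hrmem
    rw [← hrdef] at hrj' hr
    have hrj : r ≤ j := by omega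
    have hrlt : r < j := by
      rcases Nat.lt_or_ge r j with h | h
      · exact h
      · exfalso
        have hh : r = j := by omega
        exact hr (by rw [hh]; exact hjV)
    have hrun : ∀ x, r < x → x ≤ j → x ∈ V := by
      intro x hx hxj
      by_contra hxV
      have : x ≤ r := Finset.le_max' _ x (by
        simp only [Finset.mem_filter, Finset.mem_range]; exact ⟨by omega, hxV⟩)
      omega
    set V' := V.filter (· ≤ r) with hV'
    have hV'sub : V' ⊆ V := Finset.filter_subset _ _
    have hV'lt : ∀ x ∈ V', x + 1 ≤ r := by
      intro x hx
      have := Finset.mem_filter.1 hx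
      rcases Nat.lt_or_ge x r with h | h
      · omega
      · exfalso
        have hh : x = r := by omega
        exact hr (by rw [← hh]; exact (Finset.mem_filter.1 hx).1)
    have hV'ss : V' ⊂ V := by
      refine Finset.ssubset_iff_of_subset hV'sub |>.2 ⟨j, hjV, ?_⟩
      intro hmem
      have := hV'lt j hmem; omega
    obtain ⟨S', hS'sub, hS'sp, hS'card⟩ := ih V' hV'ss (fun hmem => h0 (hV'sub hmem))
    -- picks from the top run
    have h2n : 2 * ((j - r + 1) / 2) ≤ j + 2 := by omega
    set P := downPicks j ((j - r + 1) / 2) with hP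
    have hPmem : ∀ x ∈ P, r + 1 ≤ x ∧ x ≤ j := by
      intro x hx
      rw [hP, mem_downPicks h2n] at hx
      omega
    have hPsub : P ⊆ V := fun x hx => hrun x (by have := hPmem x hx; omega)
      (by have := hPmem x hx; omega)
    have hsep : ∀ x ∈ S', ∀ y ∈ P, x + 2 ≤ y := by
      intro x hx y hy
      have h1 := hV'lt x (hS'sub hx)
      have h2 := hPmem y hy
      omega
    refine ⟨S' ∪ P, ?_, sparse_union hS'sp (sparse_downPicks h2n) hsep, ?_⟩
    · intro x hx
      rcases Finset.mem_union.1 hx with h | h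
      · exact hV'sub (hS'sub h)
      · exact hPsub h
    · rw [card_union_sep hsep, hP, card_downPicks h2n]
      have hdec := oR_decomp V j r hjV hjmax hr hrj hrun
      have hVcard : V.card = V'.card + (j - r) := by
        have : V = V' ∪ Finset.Icc (r+1) j := by
          ext x
          simp only [Finset.mem_union, hV', Finset.mem_filter, Finset.mem_Icc]
          constructor
          · intro hx
            rcases Nat.lt_or_ge r x with h | h
            · exact Or.inr ⟨by omega, hjmax x hx⟩
            · exact Or.inl ⟨hx, h⟩
          · rintro (⟨hx, _⟩ | ⟨h1, h2⟩)
            · exact hx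
            · exact hrun x (by omega) h2
        rw [this, card_union_sep, Nat.card_Icc]
        · omega
        · intro x hx y hy
          have := hV'lt x hx
          have := Finset.mem_Icc.1 hy
          omega
      rw [(show V.filter (· ≤ r) = V' from hV'.symm)] at hdec
      rcases Nat.even_or_odd (j - r) with he | ho
      · rw [Nat.even_iff] at he
        rw [if_neg (by rw [Nat.odd_iff]; omega)] at hdec
        omega
      · rw [if_pos ho] at hdec
        rw [Nat.odd_iff] at ho
        omega

lemma oddContig_eq_oR (m h g : ℕ) (W : Finset ℕ) (hW : W ⊆ Finset.Icc 1 m)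
    (hh1 : 1 ≤ h) (hhg : h ≤ g) (hgm : g ≤ m) (hhW : h ∉ W) (hgW : g ∉ W)
    (hA : ∀ x, 1 ≤ x → x < h → x ∈ W) (hB : ∀ x, g < x → x ≤ m → x ∈ W) :
    oddContig m W = oR (W.filter (fun x => h < x ∧ x < g)) := by
  set Wi := W.filter (fun x => h < x ∧ x < g) with hWi
  have hmem : ∀ x, x ∈ Wi ↔ x ∈ W ∧ h < x ∧ x < g := by
    intro x; simp [hWi, Finset.mem_filter]
  rw [oddContig, oR]
  congr 1
  ext p
  rcases p with ⟨p₁, p₂⟩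
  simp only [Finset.mem_filter, Finset.mem_product, Finset.mem_Icc, Pcond]
  constructor
  · rintro ⟨⟨⟨h1a, h1b⟩, ⟨h2a, h2b⟩⟩, hle, hIcc, hl, hrt, hodd⟩
    have hp1h : h < p₁ := by
      rcases Nat.lt_or_ge (p₁ - 1) h with hc | hc
      · exfalso; exact hl (hA (p₁ - 1) (by omega) (by omega))
      · omega
    have hp2g : p₂ < g := by
      rcases Nat.lt_or_ge g (p₂ + 1) with hc | hc
      · exfalso; exact hrt (hB (p₂ + 1) (by omega) (by omega))
      · omega
    have hIccWi : Finset.Icc p₁ p₂ ⊆ Wi := by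
      intro x hx
      have hx' := Finset.mem_Icc.1 hx
      exact (hmem x).2 ⟨hIcc hx, by omega, by omega⟩
    refine ⟨⟨(hmem p₁).2 ⟨hIcc (Finset.mem_Icc.2 ⟨le_refl _, hle⟩), by omega, by omega⟩,
      (hmem p₂).2 ⟨hIcc (Finset.mem_Icc.2 ⟨hle, le_refl _⟩), by omega, by omega⟩⟩,
      hle, hIccWi, ?_, ?_, hodd⟩
    · intro hc; exact hl ((hmem _).1 hc).1
    · intro hc; exact hrt ((hmem _).1 hc).1
  · rintro ⟨⟨h1, h2⟩, hle, hIcc, hl, hrt, hodd⟩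
    obtain ⟨h1W, h1h, h1g⟩ := (hmem p₁).1 h1
    obtain ⟨h2W, h2h, h2g⟩ := (hmem p₂).1 h2
    refine ⟨⟨⟨by omega, by omega⟩, ⟨by omega, by omega⟩⟩, hle, ?_, ?_, ?_, hodd⟩
    · intro x hx; exact ((hmem x).1 (hIcc hx)).1
    · intro hc
      -- p₁ - 1 ∈ W: h < p₁ so p₁ - 1 ≥ h; p₁ - 1 = h impossible, so p₁ - 1 ∈ Wi
      rcases Nat.lt_or_ge h (p₁ - 1) with hc2 | hc2
      · exact hl ((hmem _).2 ⟨hc, hc2, by omega⟩)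
      · have : p₁ - 1 = h := by omega
        exact hhW (this ▸ hc)
    · intro hc
      rcases Nat.lt_or_ge (p₂ + 1) g with hc2 | hc2
      · exact hrt ((hmem _).2 ⟨hc, by omega, hc2⟩)
      · have : p₂ + 1 = g := by omega
        exact hgW (this ▸ hc)

lemma main (m a : ℕ) (ha : 1 ≤ a) (hm : 2*a+1 ≤ m) (W : Finset ℕ)
    (hW : W ⊆ Finset.Icc 1 m) (hbig : 2*a ≤ W.card + oddContig m W) :
    (∃ S, S ⊆ W ∧ sparse S ∧ a ≤ S.card ∧ ∀ x ∈ S, 2 ≤ x ∧ x ≤ m-1) ∨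
    (1 ∈ W ∧ m ∈ W ∧ ∃ S, S ⊆ W ∧ sparse S ∧ a-1 ≤ S.card ∧ ∀ x ∈ S, 3 ≤ x ∧ x ≤ m-2) := by
  by_cases hfull : Finset.Icc 1 m ⊆ W
  · right
    have h1W : 1 ∈ W := hfull (Finset.mem_Icc.2 ⟨le_refl _, by omega⟩)
    have hmW : m ∈ W := hfull (Finset.mem_Icc.2 ⟨by omega, le_refl _⟩)
    have h2n : 2 * (a-1) ≤ (2*(a-1)+1) + 2 := by omega
    refine ⟨h1W, hmW, downPicks (2*(a-1)+1) (a-1), ?_, sparse_downPicks h2n, ?_, ?_⟩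
    · intro x hx
      rw [mem_downPicks h2n] at hx
      exact hfull (Finset.mem_Icc.2 ⟨by omega, by omega⟩)
    · rw [card_downPicks h2n]
    · intro x hx
      rw [mem_downPicks h2n] at hx
      omega
  · have hDne : ((Finset.Icc 1 m).filter (· ∉ W)).Nonempty := by
      rw [Finset.filter_nonempty_iff]
      by_contra hc
      push_neg at hc
      exact hfull (fun x hx => hc x hx)
    set D := (Finset.Icc 1 m).filter (· ∉ W) with hD
    set h := D.min' hDne with hh
    set g := D.max' hDne with hg
    have hhmem := D.min'_mem hDne
    have hgmem := D.max'_mem hDne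
    rw [← hh] at hhmem
    rw [← hg] at hgmem
    simp only [hD, Finset.mem_filter, Finset.mem_Icc] at hhmem hgmem
    obtain ⟨⟨hh1, hhm⟩, hhW⟩ := hhmem
    obtain ⟨⟨hg1, hgm⟩, hgW⟩ := hgmem
    have hhg : h ≤ g := by
      rw [hh, hg]
      exact Finset.min'_le _ _ (by rw [← hg]; exact D.max'_mem hDne)
    have hA : ∀ x, 1 ≤ x → x < h → x ∈ W := by
      intro x hx1 hxh
      by_contra hxW
      have : h ≤ x := by
        rw [hh]
        refine Finset.min'_le _ _ ?_
        simp only [hD, Finset.mem_filter, Finset.mem_Icc]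
        exact ⟨⟨hx1, by omega⟩, hxW⟩
      omega
    have hB : ∀ x, g < x → x ≤ m → x ∈ W := by
      intro x hx1 hxm
      by_contra hxW
      have : x ≤ g := by
        rw [hg]
        refine Finset.le_max' _ _ ?_
        simp only [hD, Finset.mem_filter, Finset.mem_Icc]
        exact ⟨⟨by omega, hxm⟩, hxW⟩
      omega
    set Wi := W.filter (fun x => h < x ∧ x < g) with hWi
    have hWisub : Wi ⊆ W := Finset.filter_subset _ _
    have hWibnd : ∀ x ∈ Wi, h + 1 ≤ x ∧ x + 1 ≤ g := by
      intro x hx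
      have := Finset.mem_filter.1 hx
      omega
    obtain ⟨S', hS'sub, hS'sp, hS'card⟩ := lemR Wi (by
      intro hc
      have := hW (hWisub hc)
      simp [Finset.mem_Icc] at this)
    have hoc : oddContig m W = oR Wi :=
      oddContig_eq_oR m h g W hW hh1 hhg hgm hhW hgW hA hB
    have hcard : W.card = (h - 1) + Wi.card + (m - g) := by
      have hsplit : W = (Finset.Icc 1 (h-1) ∪ Wi) ∪ Finset.Icc (g+1) m := by
        ext x
        simp only [Finset.mem_union, hWi, Finset.mem_filter, Finset.mem_Icc]
        constructor
        · intro hx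
          have hx1m := Finset.mem_Icc.1 (hW hx)
          have hxh : x ≠ h := fun e => hhW (e ▸ hx)
          have hxg : x ≠ g := fun e => hgW (e ▸ hx)
          rcases Nat.lt_or_ge x h with hc | hc
          · exact Or.inl (Or.inl ⟨by omega, by omega⟩)
          · rcases Nat.lt_or_ge x g with hc2 | hc2
            · exact Or.inl (Or.inr ⟨hx, by omega, hc2⟩)
            · exact Or.inr ⟨by omega, by omega⟩
        · rintro ((⟨h1, h2⟩ | ⟨h1, _⟩) | ⟨h1, h2⟩)
          · exact hA x h1 (by omega)
          · exact h1
          · exact hB x (by omega) h2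
      rw [hsplit]
      rw [card_union_sep, card_union_sep, Nat.card_Icc, Nat.card_Icc]
      · omega
      · intro x hx y hy
        have := Finset.mem_Icc.1 hx
        have := hWibnd y hy
        omega
      · intro x hx y hy
        have hy' := Finset.mem_Icc.1 hy
        rcases Finset.mem_union.1 hx with hx' | hx'
        · have := Finset.mem_Icc.1 hx'
          omega
        · have := hWibnd x hx'
          omega
    by_cases hpar : Odd (h - 1) ∧ Odd (m - g)
    · -- type 2
      obtain ⟨hp1, hp2⟩ := hpar
      rw [Nat.odd_iff] at hp1 hp2
      have hh2 : 2 ≤ h := by omega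
      have hgm1 : g + 1 ≤ m := by omega
      right
      refine ⟨hA 1 (le_refl _) (by omega), hB m (by omega) (le_refl _), ?_⟩
      have hA2n : 2 * ((h-2)/2) ≤ (2*((h-2)/2)+1) + 2 := by omega
      have hB2n : 2 * ((m-g-1)/2) ≤ (m-2) + 2 := by omega
      set PA := downPicks (2*((h-2)/2)+1) ((h-2)/2) with hPA
      set PB := downPicks (m-2) ((m-g-1)/2) with hPB
      have hPAb : ∀ x ∈ PA, 3 ≤ x ∧ x ≤ h - 1 := by
        intro x hx
        rw [hPA, mem_downPicks hA2n] at hx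
        omega
      have hPBb : ∀ x ∈ PB, g + 1 ≤ x ∧ x ≤ m - 2 := by
        intro x hx
        rw [hPB, mem_downPicks hB2n] at hx
        omega
      have hsep1 : ∀ x ∈ S', ∀ y ∈ PB, x + 2 ≤ y := by
        intro x hx y hy
        have := hWibnd x (hS'sub hx)
        have := hPBb y hy
        omega
      have hsep2 : ∀ x ∈ PA, ∀ y ∈ S' ∪ PB, x + 2 ≤ y := by
        intro x hx y hy
        have hx' := hPAb x hx
        rcases Finset.mem_union.1 hy with hy' | hy'
        · have := hWibnd y (hS'sub hy')
          omega
        · have := hPBb y hy'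
          omega
      refine ⟨PA ∪ (S' ∪ PB), ?_, ?_, ?_, ?_⟩
      · intro x hx
        rcases Finset.mem_union.1 hx with hx' | hx'
        · have := hPAb x hx'
          exact hA x (by omega) (by omega)
        · rcases Finset.mem_union.1 hx' with hx'' | hx''
          · exact hWisub (hS'sub hx'')
          · have := hPBb x hx''
            exact hB x (by omega) (by omega)
      · exact sparse_union (sparse_downPicks hA2n)
          (sparse_union hS'sp (sparse_downPicks hB2n) hsep1) hsep2
      · rw [card_union_sep hsep2, card_union_sep hsep1, hPA, hPB,
          card_downPicks hA2n, card_downPicks hB2n]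
        omega
      · intro x hx
        rcases Finset.mem_union.1 hx with hx' | hx'
        · have := hPAb x hx'
          omega
        · rcases Finset.mem_union.1 hx' with hx'' | hx''
          · have := hWibnd x (hS'sub hx'')
            omega
          · have := hPBb x hx''
            omega
    · -- type 1
      left
      have hnpar : ¬((h-1) % 2 = 1 ∧ (m-g) % 2 = 1) := by
        rw [← Nat.odd_iff, ← Nat.odd_iff]
        exact hpar
      have hA2n : 2 * ((h-1)/2) ≤ (2*((h-1)/2)) + 2 := by omega
      have hB2n : 2 * ((m-g)/2) ≤ (m-1) + 2 := by omega
      set PA := downPicks (2*((h-1)/2)) ((h-1)/2) with hPA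
      set PB := downPicks (m-1) ((m-g)/2) with hPB
      have hPAb : ∀ x ∈ PA, 2 ≤ x ∧ x ≤ h - 1 := by
        intro x hx
        rw [hPA, mem_downPicks hA2n] at hx
        omega
      have hPBb : ∀ x ∈ PB, g + 1 ≤ x ∧ x ≤ m - 1 := by
        intro x hx
        rw [hPB, mem_downPicks hB2n] at hx
        omega
      have hsep1 : ∀ x ∈ S', ∀ y ∈ PB, x + 2 ≤ y := by
        intro x hx y hy
        have := hWibnd x (hS'sub hx)
        have := hPBb y hy
        omega
      have hsep2 : ∀ x ∈ PA, ∀ y ∈ S' ∪ PB, x + 2 ≤ y := by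
        intro x hx y hy
        have hx' := hPAb x hx
        rcases Finset.mem_union.1 hy with hy' | hy'
        · have := hWibnd y (hS'sub hy')
          omega
        · have := hPBb y hy'
          omega
      refine ⟨PA ∪ (S' ∪ PB), ?_, ?_, ?_, ?_⟩
      · intro x hx
        rcases Finset.mem_union.1 hx with hx' | hx'
        · have := hPAb x hx'
          exact hA x (by omega) (by omega)
        · rcases Finset.mem_union.1 hx' with hx'' | hx''
          · exact hWisub (hS'sub hx'')
          · have := hPBb x hx''
            exact hB x (by omega) (by omega)
      · exact sparse_union (sparse_downPicks hA2n)
          (sparse_union hS'sp (sparse_downPicks hB2n) hsep1) hsep2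
      · rw [card_union_sep hsep2, card_union_sep hsep1, hPA, hPB,
          card_downPicks hA2n, card_downPicks hB2n]
        omega
      · intro x hx
        rcases Finset.mem_union.1 hx with hx' | hx'
        · have := hPAb x hx'
          omega
        · rcases Finset.mem_union.1 hx' with hx'' | hx''
          · have := hWibnd x (hS'sub hx'')
            omega
          · have := hPBb x hx''
            omega

/-- Extraction of an increasing enumeration from a sparse finset. -/
lemma exists_chain (S : Finset ℕ) (n : ℕ) (hn : S.card = n) (h1 : 1 ≤ n)
    (hsp : sparse S) :
    ∃ t : ℕ → ℕ, (∀ j < n, t j ∈ S) ∧ (∀ j, j + 1 < n → t j + 2 ≤ t (j + 1)) ∧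
      (∀ x ∈ Finset.range n, ∀ y ∈ Finset.range n, t x = t y → x = y) ∧
      (Finset.range n).image t = S := by
  set e := S.orderIsoOfFin hn with he
  set t : ℕ → ℕ := fun j => if h : j < n then (e ⟨j, h⟩ : ℕ) else 0 with ht
  have htmem : ∀ j (h : j < n), t j ∈ S := by
    intro j h
    simp only [ht, dif_pos h]
    exact (e ⟨j, h⟩).2
  have hmono : ∀ i j (hi : i < n) (hj : j < n), i < j → t i < t j := by
    intro i j hi hj hij
    simp only [ht, dif_pos hi, dif_pos hj]
    have : (⟨i, hi⟩ : Fin n) < ⟨j, hj⟩ := hij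
    exact e.strictMono this
  refine ⟨t, fun j h => htmem j h, ?_, ?_, ?_⟩
  · intro j hj
    have h1' := hmono j (j+1) (by omega) hj (by omega)
    have h2' := htmem j (by omega)
    have h3' := htmem (j+1) hj
    rcases Nat.lt_or_ge (t j + 1) (t (j+1)) with h | h
    · omega
    · have : t (j+1) = t j + 1 := by omega
      exact absurd (this ▸ h3') (hsp _ h2')
  · intro x hx y hy hxy
    simp only [Finset.mem_range] at hx hy
    rcases Nat.lt_trichotomy x y with h | h | h
    · exact absurd hxy (by have := hmono x y hx hy h; omega)
    · exact h
    · exact absurd hxy (by have := hmono y x hy hx h; omega)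
  · apply Finset.eq_of_subset_of_card_le
    · intro x hx
      obtain ⟨j, hj, rfl⟩ := Finset.mem_image.1 hx
      exact htmem j (Finset.mem_range.1 hj)
    · rw [hn, Finset.card_image_of_injOn, Finset.card_range]
      intro x hx y hy hxy
      simp only [Finset.mem_coe, Finset.mem_range] at hx hy
      rcases Nat.lt_trichotomy x y with h | h | h
      · exact absurd hxy (by have := hmono x y hx hy h; omega)
      · exact h
      · exact absurd hxy (by have := hmono y x hy hx h; omega)

lemma prod_mem_idealI (k : Type*) [Field k] (n a p q : ℕ) (ha : 1 ≤ a) (S : Finset ℕ)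
    (hcard : S.card = a) (hsp : sparse S) (hb : ∀ x ∈ S, p ≤ x ∧ x ≤ q) :
    (∏ x ∈ S, Xv k n x) ∈ idealI k n a p q := by
  obtain ⟨t, htS, htgap, htinj, htim⟩ := exists_chain S a hcard ha hsp
  apply Ideal.subset_span
  refine ⟨t, (hb _ (htS 0 (by omega))).1, (hb _ (htS (a-1) (by omega))).2, htgap, ?_⟩
  rw [← htim, Finset.prod_image htinj]

lemma le_oddContig (m : ℕ) (W T : Finset ℕ) (hT : T ⊆ W)
    (hb : ∀ x ∈ T, 2 ≤ x ∧ x ≤ m - 1)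
    (hnb : ∀ x ∈ T, x - 1 ∉ W ∧ x + 1 ∉ W) : T.card ≤ oddContig m W := by
  rw [oddContig]
  apply Finset.card_le_card_of_injOn (fun x => (x, x))
  · intro x hx
    simp only [Finset.mem_coe, Finset.mem_filter, Finset.mem_product, Finset.mem_Icc]
    obtain ⟨h1, h2⟩ := hb x hx
    obtain ⟨h3, h4⟩ := hnb x hx
    refine ⟨⟨⟨h1, h2⟩, ⟨h1, h2⟩⟩, le_refl _, ?_, h3, h4, ?_⟩
    · intro y hy
      have hy' := Finset.mem_Icc.1 hy
      have : y = x := by omega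
      exact this ▸ hT hx
    · have : x - x + 1 = 1 := by omega
      rw [this]; exact odd_one
  · intro x _ y _ hxy
    exact congrArg Prod.fst hxy

lemma chain_mono (t : ℕ → ℕ) (n : ℕ) (hg : ∀ j, j + 1 < n → t j + 2 ≤ t (j + 1)) :
    ∀ j, j < n → ∀ i, i ≤ j → t i + 2 * (j - i) ≤ t j := by
  intro j
  induction j with
  | zero =>
    intro _ i hi
    have : i = 0 := by omega
    subst this; simp
  | succ j ih =>
    intro hj i hi
    rcases Nat.eq_or_lt_of_le hi with h | h
    · subst h; simp
    · have h1 := ih (by omega) i (by omega)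
      have h2 := hg j (by omega)
      omega

/-- Generators of `I_{a,2,m-1}` are nonface monomials. -/
lemma gen1_mem (k : Type*) [Field k] (d m a : ℕ) (h2a : 2 * a = d + 1) (ha : 1 ≤ a)
    (hm : 2 * a + 1 ≤ m) (t : ℕ → ℕ) (ht0 : 2 ≤ t 0) (hta : t (a - 1) ≤ m - 1)
    (hgap : ∀ j, j + 1 < a → t j + 2 ≤ t (j + 1)) :
    (∏ j ∈ Finset.range a, Xv k m (t j)) ∈ SRideal k d m := by
  have hmono := chain_mono t a hgap
  have hbnd : ∀ j, j < a → 2 ≤ t j ∧ t j ≤ m - 1 := by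
    intro j hj
    constructor
    · have := hmono j hj 0 (by omega); omega
    · have := hmono (a-1) (by omega) j (by omega); omega
  have hinj : ∀ x ∈ Finset.range a, ∀ y ∈ Finset.range a, t x = t y → x = y := by
    intro x hx y hy hxy
    simp only [Finset.mem_range] at hx hy
    rcases Nat.lt_trichotomy x y with h | h | h
    · have := hmono y hy x (by omega); omega
    · exact h
    · have := hmono x hx y (by omega); omega
  set T := (Finset.range a).image t with hT
  have hTmem : ∀ x, x ∈ T ↔ ∃ j < a, t j = x := by
    intro x; simp [hT, Finset.mem_image, Finset.mem_range]
  have hTb : ∀ x ∈ T, 2 ≤ x ∧ x ≤ m - 1 := by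
    intro x hx
    obtain ⟨j, hj, rfl⟩ := (hTmem x).1 hx
    exact hbnd j hj
  have hTcard : T.card = a := by
    rw [hT, Finset.card_image_of_injOn (fun x hx y hy => hinj x hx y hy), Finset.card_range]
  have hTnb : ∀ x ∈ T, x - 1 ∉ T ∧ x + 1 ∉ T := by
    intro x hx
    obtain ⟨i, hi, rfl⟩ := (hTmem x).1 hx
    constructor
    · intro hc
      obtain ⟨j, hj, hj'⟩ := (hTmem _).1 hc
      have h2 := hbnd i hi
      rcases Nat.lt_trichotomy i j with h | h | h
      · have := hmono j hj i (by omega); omega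
      · subst h; omega
      · have := hmono i hi j (by omega); omega
    · intro hc
      obtain ⟨j, hj, hj'⟩ := (hTmem _).1 hc
      rcases Nat.lt_trichotomy i j with h | h | h
      · have := hmono j hj i (by omega); omega
      · subst h; omega
      · have := hmono i hi j (by omega); omega
  have hodd : T.card ≤ oddContig m T :=
    le_oddContig m T T (Finset.Subset.refl _) hTb hTnb
  apply Ideal.subset_span
  refine ⟨T, ?_, ?_, ?_⟩
  · intro x hx
    have := hTb x hx
    rw [Finset.mem_Icc]
    omega
  · rintro ⟨_, hc1, hc2⟩
    omega
  · rw [hT, Finset.prod_image hinj]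

/-- `x₁ xₘ` times a generator of `I_{a-1,3,m-2}` is a nonface monomial. -/
lemma gen2_mem (k : Type*) [Field k] (d m a : ℕ) (h2a : 2 * a = d + 1) (ha : 2 ≤ a)
    (hm : 2 * a + 1 ≤ m) (t : ℕ → ℕ) (ht0 : 3 ≤ t 0) (hta : t (a - 1 - 1) ≤ m - 2)
    (hgap : ∀ j, j + 1 < a - 1 → t j + 2 ≤ t (j + 1)) :
    (Xv k m 1 * Xv k m m) * (∏ j ∈ Finset.range (a-1), Xv k m (t j)) ∈ SRideal k d m := by
  have hmono := chain_mono t (a-1) hgap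
  have hbnd : ∀ j, j < a - 1 → 3 ≤ t j ∧ t j ≤ m - 2 := by
    intro j hj
    constructor
    · have := hmono j hj 0 (by omega); omega
    · have := hmono (a-1-1) (by omega) j (by omega); omega
  have hinj : ∀ x ∈ Finset.range (a-1), ∀ y ∈ Finset.range (a-1), t x = t y → x = y := by
    intro x hx y hy hxy
    simp only [Finset.mem_range] at hx hy
    rcases Nat.lt_trichotomy x y with h | h | h
    · have := hmono y hy x (by omega); omega
    · exact h
    · have := hmono x hx y (by omega); omega
  set T := (Finset.range (a-1)).image t with hT
  have hTmem : ∀ x, x ∈ T ↔ ∃ j < a - 1, t j = x := by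
    intro x; simp [hT, Finset.mem_image, Finset.mem_range]
  have hTb : ∀ x ∈ T, 3 ≤ x ∧ x ≤ m - 2 := by
    intro x hx
    obtain ⟨j, hj, rfl⟩ := (hTmem x).1 hx
    exact hbnd j hj
  have hTcard : T.card = a - 1 := by
    rw [hT, Finset.card_image_of_injOn (fun x hx y hy => hinj x hx y hy), Finset.card_range]
  have hmT : m ∉ T := by
    intro hc; have := hTb m hc; omega
  have h1T : (1 : ℕ) ∉ insert m T := by
    intro hc
    rcases Finset.mem_insert.1 hc with h | h
    · omega
    · have := hTb 1 h; omega
  set W := insert 1 (insert m T) with hW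
  have hWmem : ∀ x, x ∈ W ↔ x = 1 ∨ x = m ∨ x ∈ T := by
    intro x; simp [hW, Finset.mem_insert]
  have hWcard : W.card = a + 1 := by
    rw [hW, Finset.card_insert_of_notMem h1T, Finset.card_insert_of_notMem hmT, hTcard]
    omega
  have hTnb : ∀ x ∈ T, x - 1 ∉ W ∧ x + 1 ∉ W := by
    intro x hx
    obtain ⟨i, hi, rfl⟩ := (hTmem x).1 hx
    have hbi := hbnd i hi
    constructor
    · intro hc
      rcases (hWmem _).1 hc with h | h | h
      · omega
      · omega
      · obtain ⟨j, hj, hj'⟩ := (hTmem _).1 h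
        rcases Nat.lt_trichotomy i j with h' | h' | h'
        · have := hmono j hj i (by omega); omega
        · subst h'; omega
        · have := hmono i hi j (by omega); omega
    · intro hc
      rcases (hWmem _).1 hc with h | h | h
      · omega
      · omega
      · obtain ⟨j, hj, hj'⟩ := (hTmem _).1 h
        rcases Nat.lt_trichotomy i j with h' | h' | h'
        · have := hmono j hj i (by omega); omega
        · subst h'; omega
        · have := hmono i hi j (by omega); omega
  have hodd : T.card ≤ oddContig m W := by
    apply le_oddContig m W T
    · intro x hx
      rw [hWmem]; right; right; exact hx
    · intro x hx; have := hTb x hx; omega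
    · exact hTnb
  apply Ideal.subset_span
  refine ⟨W, ?_, ?_, ?_⟩
  · intro x hx
    rcases (hWmem x).1 hx with h | h | h
    · rw [Finset.mem_Icc]; omega
    · rw [Finset.mem_Icc]; omega
    · have := hTb x h; rw [Finset.mem_Icc]; omega
  · rintro ⟨_, hc1, hc2⟩
    omega
  · rw [hW, Finset.prod_insert h1T, Finset.prod_insert hmT, hT, Finset.prod_image hinj,
      mul_assoc]


end SRaux

/-- For `d` odd with `d ≥ 3`, `d + 1 < m` and `a = (d+1)/2`, the Stanley–Reisner ideal of
`Δ(d,m)` equals `I_{a,2,m−1} + x_1x_m·I_{a−1,3,m−2}`. -/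
theorem stanleyReisner_cyclic_odd (k : Type*) [Field k] (d m : ℕ)
    (hd : Odd d) (hd3 : 3 ≤ d) (hm : d + 1 < m) (a : ℕ) (ha : a = (d + 1) / 2) :
    SRideal k d m = idealI k m a 2 (m - 1) +
      Ideal.span {Xv k m 1 * Xv k m m} * idealI k m (a - 1) 3 (m - 2) := by
  have hd2 : d % 2 = 1 := Nat.odd_iff.1 hd
  have h2a : 2 * a = d + 1 := by omega
  have ha2 : 2 ≤ a := by omega
  have hma : 2 * a + 1 ≤ m := by omega
  apply le_antisymm
  · -- SR ≤ I₁ + J * I₂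
    rw [SRideal]
    apply Ideal.span_le.2
    rintro f ⟨W, hWsub, hWnf, rfl⟩
    rw [SetLike.mem_coe]
    have hbig : 2 * a ≤ W.card + oddContig m W := by
      have : ¬(W.card ≤ d ∧ oddContig m W ≤ d - W.card) := fun hc => hWnf ⟨hWsub, hc.1, hc.2⟩
      omega
    rcases SRaux.main m a (by omega) hma W hWsub hbig with
      ⟨S, hSW, hSsp, hScard, hSb⟩ | ⟨h1W, hmW, S, hSW, hSsp, hScard, hSb⟩
    · obtain ⟨T, hTS, hTcard⟩ := Finset.exists_subset_card_eq hScard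
      have hTW : T ⊆ W := hTS.trans hSW
      have hmem : (∏ x ∈ T, Xv k m x) ∈ idealI k m a 2 (m-1) :=
        SRaux.prod_mem_idealI k m a 2 (m-1) (by omega) T hTcard
          (SRaux.sparse_subset hTS hSsp) (fun x hx => hSb x (hTS hx))
      rw [← Finset.prod_sdiff hTW]
      rw [Ideal.add_eq_sup]
      exact Ideal.mem_sup_left (Ideal.mul_mem_left _ _ hmem)
    · obtain ⟨T, hTS, hTcard⟩ := Finset.exists_subset_card_eq hScard
      have hTW : T ⊆ W := hTS.trans hSW
      have hTb : ∀ x ∈ T, 3 ≤ x ∧ x ≤ m - 2 := fun x hx => hSb x (hTS hx)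
      have hmT : m ∉ T := by intro hc; have := hTb m hc; omega
      have h1T : (1 : ℕ) ∉ insert m T := by
        intro hc
        rcases Finset.mem_insert.1 hc with h | h
        · omega
        · have := hTb 1 h; omega
      have hWT : insert 1 (insert m T) ⊆ W := by
        intro x hx
        rcases Finset.mem_insert.1 hx with h | h
        · exact h ▸ h1W
        · rcases Finset.mem_insert.1 h with h' | h'
          · exact h' ▸ hmW
          · exact hTW h'
      have hmem : (∏ x ∈ T, Xv k m x) ∈ idealI k m (a-1) 3 (m-2) :=
        SRaux.prod_mem_idealI k m (a-1) 3 (m-2) (by omega) T hTcard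
          (SRaux.sparse_subset hTS hSsp) hTb
      have hmem2 : (Xv k m 1 * Xv k m m) * (∏ x ∈ T, Xv k m x) ∈
          Ideal.span {Xv k m 1 * Xv k m m} * idealI k m (a-1) 3 (m-2) :=
        Ideal.mul_mem_mul (Ideal.subset_span rfl) hmem
      rw [← Finset.prod_sdiff hWT, Finset.prod_insert h1T, Finset.prod_insert hmT]
      rw [Ideal.add_eq_sup]
      apply Ideal.mem_sup_right
      apply Ideal.mul_mem_left
      rw [← mul_assoc]
      exact hmem2
  · rw [Ideal.add_eq_sup, sup_le_iff]
    constructor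
    · rw [idealI]
      apply Ideal.span_le.2
      rintro f ⟨t, ht0, hta, hgap, rfl⟩
      rw [SetLike.mem_coe]
      exact SRaux.gen1_mem k d m a h2a (by omega) hma t ht0 hta hgap
    · rw [idealI, Ideal.span_mul_span']
      apply Ideal.span_le.2
      rintro z hz
      rw [Set.mem_mul] at hz
      obtain ⟨x, hx, y, hy, rfl⟩ := hz
      rw [Set.mem_singleton_iff] at hx
      obtain ⟨t, ht0, hta, hgap, rfl⟩ := hy
      rw [SetLike.mem_coe, hx]
      exact SRaux.gen2_mem k d m a h2a ha2 hma t ht0 hta hgap
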